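/- If C is an N×N column-stochastic matrix with strictly positive entries, then its spectral radius is 1, the eigenvalue 1 is simple, the vector (1/N,…,1/N) (equivalently the all-ones vector) is a left eigenvector for eigenvalue 1, and there is a unique right eigenvector v with strictly positive entries summing to 1 (the PageRank vector). -/

import Mathlib

open Matrix Polynomial

section Real
variable {N : ℕ} {C : Matrix (Fin N) (Fin N) ℝ}

lemma csum_mulVec (h_col : ∀ j, ∑ i, C i j = 1) (v : Fin N → ℝ) :
    ∑ i, C.mulVec v i = ∑ i, v i := by
  simp only [Matrix.mulVec, dotProduct]
  rw [Finset.sum_comm]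
  simp [← Finset.sum_mul, h_col]

lemma cL1 (h_pos : ∀ i j, 0 < C i j) {v : Fin N → ℝ}
    (hv : C.mulVec v = v) (hnn : ∀ i, 0 ≤ v i) (hne : v ≠ 0) : ∀ i, 0 < v i := by
  obtain ⟨j0, hj0⟩ := Function.ne_iff.mp hne
  have hj0' : 0 < v j0 := lt_of_le_of_ne (hnn j0) (Ne.symm hj0)
  intro i
  have : C i j0 * v j0 ≤ ∑ j, C i j * v j :=
    Finset.single_le_sum (fun j _ => mul_nonneg (h_pos i j).le (hnn j)) (Finset.mem_univ j0)
  have h2 : C.mulVec v i = ∑ j, C i j * v j := rfl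
  calc (0:ℝ) < C i j0 * v j0 := mul_pos (h_pos i j0) hj0'
    _ ≤ ∑ j, C i j * v j := this
    _ = v i := by rw [← h2, hv]

lemma cL0 (h_pos : ∀ i j, 0 < C i j) (h_col : ∀ j, ∑ i, C i j = 1) {v : Fin N → ℝ}
    (hv : C.mulVec v = v) : C.mulVec (fun i => |v i|) = fun i => |v i| := by
  set w : Fin N → ℝ := fun i => |v i| with hw
  have hle : ∀ i, w i ≤ C.mulVec w i := by
    intro i
    have : |C.mulVec v i| ≤ C.mulVec w i := by
      simp only [Matrix.mulVec, dotProduct]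
      refine (Finset.abs_sum_le_sum_abs _ _).trans ?_
      apply Finset.sum_le_sum
      intro j _
      rw [abs_mul, abs_of_pos (h_pos i j)]
    rwa [hv] at this
  have hsum : ∑ i, (C.mulVec w i - w i) = 0 := by
    rw [Finset.sum_sub_distrib, csum_mulVec h_col, sub_self]
  have hz : ∀ i ∈ Finset.univ, C.mulVec w i - w i = 0 := by
    rw [← Finset.sum_eq_zero_iff_of_nonneg (fun i _ => sub_nonneg.mpr (hle i))]
    exact hsum
  funext i
  have := hz i (Finset.mem_univ i)
  linarith [this]

lemma cL2 (hN : 0 < N) (h_pos : ∀ i j, 0 < C i j) (h_col : ∀ j, ∑ i, C i j = 1)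
    {v : Fin N → ℝ} (hv : C.mulVec v = v) (hzero : ∑ i, v i = 0) : v = 0 := by
  by_contra hne
  set w : Fin N → ℝ := fun i => |v i| with hwdef
  have hw : C.mulVec w = w := cL0 h_pos h_col hv
  have hwne : w ≠ 0 := by
    intro h
    apply hne
    funext i
    have := congrFun h i
    simpa [hwdef, abs_eq_zero] using this
  have hwpos : ∀ i, 0 < w i := cL1 h_pos hw (fun i => abs_nonneg _) hwne
  set u : Fin N → ℝ := w - v with hu
  have hufix : C.mulVec u = u := by
    rw [hu, Matrix.mulVec_sub, hw, hv]
  have hunn : ∀ i, 0 ≤ u i := fun i => by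
    simp only [hu, Pi.sub_apply, hwdef, sub_nonneg]; exact le_abs_self _
  rcases eq_or_ne u 0 with h0 | h0
  · have : ∀ i, v i = w i := by
      intro i
      have := congrFun h0 i
      simp only [hu, Pi.sub_apply, Pi.zero_apply] at this
      linarith
    have : 0 < ∑ i, v i := by
      apply Finset.sum_pos (fun i _ => by rw [this i]; exact hwpos i)
      exact ⟨⟨0, hN⟩, Finset.mem_univ _⟩
    linarith
  · have hupos := cL1 h_pos hufix hunn h0
    have hvneg : ∀ i, v i < 0 := by
      intro i
      have h1 : v i < w i := by have := hupos i; simp only [hu, Pi.sub_apply] at this; linarith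
      by_contra h
      push_neg at h
      rw [hwdef] at h1
      simp only [abs_of_nonneg h] at h1
      exact lt_irrefl _ h1
    have : ∑ i, v i < 0 :=
      Finset.sum_neg (fun i _ => hvneg i) ⟨⟨0, hN⟩, Finset.mem_univ _⟩
    linarith

lemma cExists (hN : 0 < N) (h_pos : ∀ i j, 0 < C i j) (h_col : ∀ j, ∑ i, C i j = 1) :
    ∃ p : Fin N → ℝ, (∀ i, 0 < p i) ∧ (∑ i, p i = 1) ∧ C.mulVec p = p := by
  have hdet : (C - 1).det = 0 := by
    have h1 : (C.transpose - 1).mulVec (fun _ => (1:ℝ)) = 0 := by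
      funext i
      simp only [Matrix.mulVec, dotProduct, Matrix.sub_apply, Matrix.transpose_apply,
        mul_one, Pi.zero_apply]
      rw [Finset.sum_sub_distrib, h_col i]
      simp [Matrix.one_apply]
    have h2 : (C.transpose - 1).det = 0 := by
      rw [← Matrix.exists_mulVec_eq_zero_iff]
      refine ⟨fun _ => 1, ?_, h1⟩
      intro h
      have := congrFun h ⟨0, hN⟩
      simpa using this
    calc (C - 1).det = (C - 1).transpose.det := (Matrix.det_transpose _).symm
      _ = (C.transpose - 1).det := by rw [Matrix.transpose_sub, Matrix.transpose_one]
      _ = 0 := h2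
  obtain ⟨v, hvne, hv0⟩ := (Matrix.exists_mulVec_eq_zero_iff).mpr hdet
  have hv : C.mulVec v = v := by
    have := hv0
    rw [Matrix.sub_mulVec, Matrix.one_mulVec, sub_eq_zero] at this
    exact this
  set w : Fin N → ℝ := fun i => |v i| with hwdef
  have hw : C.mulVec w = w := cL0 h_pos h_col hv
  have hwne : w ≠ 0 := by
    intro h
    apply hvne
    funext i
    have := congrFun h i
    simpa [hwdef, abs_eq_zero] using this
  have hwpos : ∀ i, 0 < w i := cL1 h_pos hw (fun i => abs_nonneg _) hwne
  set s : ℝ := ∑ i, w i with hs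
  have hspos : 0 < s := Finset.sum_pos (fun i _ => hwpos i) ⟨⟨0, hN⟩, Finset.mem_univ _⟩
  refine ⟨s⁻¹ • w, fun i => by simpa using mul_pos (inv_pos.mpr hspos) (hwpos i), ?_, ?_⟩
  · simp only [Pi.smul_apply, smul_eq_mul, ← Finset.mul_sum]
    field_simp
    exact hs.symm
  · rw [Matrix.mulVec_smul, hw]

lemma cL3 (hN : 0 < N) (h_pos : ∀ i j, 0 < C i j) (h_col : ∀ j, ∑ i, C i j = 1)
    {p : Fin N → ℝ} (hp1 : ∑ i, p i = 1) (hp : C.mulVec p = p)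
    {v : Fin N → ℝ} (hv : C.mulVec v = v) : v = (∑ i, v i) • p := by
  have key : v - (∑ i, v i) • p = 0 := by
    apply cL2 hN h_pos h_col
    · rw [Matrix.mulVec_sub, hv, Matrix.mulVec_smul, hp]
    · simp only [Pi.sub_apply]
      rw [Finset.sum_sub_distrib]
      simp only [Pi.smul_apply, smul_eq_mul, ← Finset.mul_sum, hp1, mul_one, sub_self]
  exact sub_eq_zero.mp key
end Real
section Cplx
variable {N : ℕ} {C : Matrix (Fin N) (Fin N) ℝ}

-- complexification of fixed vectors
lemma cMapFix {v : Fin N → ℝ} (hv : C.mulVec v = v) :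
    (C.map Complex.ofReal).mulVec (fun i => (v i : ℂ)) = fun i => (v i : ℂ) := by
  funext i
  have := congrFun hv i
  simp only [Matrix.mulVec, dotProduct, Matrix.map_apply] at this ⊢
  push_cast
  exact_mod_cast congrArg (Complex.ofReal) this

lemma cReFix {x : Fin N → ℂ} (hx : (C.map Complex.ofReal).mulVec x = x) :
    (C.mulVec (fun i => (x i).re) = fun i => (x i).re) ∧
    (C.mulVec (fun i => (x i).im) = fun i => (x i).im) := by
  constructor <;> funext i <;> {
    have := congrFun hx i
    simp only [Matrix.mulVec, dotProduct, Matrix.map_apply] at this ⊢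
    rw [← this]
    simp [Complex.re_sum, Complex.im_sum, Complex.re_ofReal_mul, Complex.im_ofReal_mul]
  }

end Cplx

section Charpoly
variable {m : Type*} [Fintype m] [DecidableEq m]

lemma myEvalCharpoly (M : Matrix m m ℂ) (r : ℂ) :
    M.charpoly.eval r = (Matrix.scalar m r - M).det := by
  rw [Matrix.charpoly, _root_.eval_det, Matrix.matPolyEquiv_charmatrix]
  simp

lemma myCharpolySimilar (P Q T : Matrix m m ℂ) (h1 : P * Q = 1) :
    (P * T * Q).charpoly = T.charpoly := by
  have hmap : (P.map (Polynomial.C : ℂ →+* ℂ[X])) * (Q.map Polynomial.C) = 1 := by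
    rw [← Matrix.map_mul, h1, Matrix.map_one _ (map_zero _) (map_one _)]
  have key : Matrix.charmatrix (P * T * Q) =
      (P.map Polynomial.C) * Matrix.charmatrix T * (Q.map Polynomial.C) := by
    have hs : (Matrix.scalar m (X : ℂ[X])) = (X : ℂ[X]) • (1 : Matrix m m ℂ[X]) := by
      rw [Matrix.smul_eq_diagonal_mul, Matrix.mul_one]
      rfl
    unfold Matrix.charmatrix
    rw [Matrix.mul_sub, Matrix.sub_mul, hs]
    congr 1
    · rw [Matrix.mul_smul, Matrix.mul_one, Matrix.smul_mul, hmap]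
    · simp [Matrix.map_mul]
  unfold Matrix.charpoly
  rw [key, Matrix.det_mul, Matrix.det_mul]
  have : (P.map (Polynomial.C : ℂ →+* ℂ[X])).det * (Q.map Polynomial.C).det = 1 := by
    rw [← Matrix.det_mul, hmap, Matrix.det_one]
  calc (P.map Polynomial.C).det * (Matrix.charmatrix T).det * (Q.map Polynomial.C).det
      = (Matrix.charmatrix T).det * ((P.map Polynomial.C).det * (Q.map Polynomial.C).det) := by ring
    _ = (Matrix.charmatrix T).det := by rw [this, mul_one]

lemma myCharpolyOne1 : (1 : Matrix (Fin 1) (Fin 1) ℂ).charpoly = X - Polynomial.C 1 := by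
  have h : (1 : Matrix (Fin 1) (Fin 1) ℂ).BlockTriangular id := by
    intro i j hij
    exact absurd (Subsingleton.elim i j) (by rintro rfl; exact lt_irrefl _ hij)
  rw [Matrix.charpoly_of_upperTriangular _ h]
  simp
end Charpoly

section Mult

lemma myRootMult {n : ℕ} (C : Matrix (Fin (n+1)) (Fin (n+1)) ℝ)
    (h_col : ∀ j, ∑ i, C i j = 1)
    (p : Fin (n+1) → ℝ) (hp1 : ∑ i, p i = 1) (hp : C.mulVec p = p)
    (hq : (C.map Complex.ofReal).mulVec (fun i => (p i : ℂ)) = fun i => (p i : ℂ))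
    (hK : ∀ x : Fin (n+1) → ℂ, (C.map Complex.ofReal).mulVec x = x →
      ∃ c : ℂ, x = fun i => c * (p i : ℂ)) :
    (C.map Complex.ofReal).charpoly.rootMultiplicity 1 = 1 := by
  set A : Matrix (Fin (n+1)) (Fin (n+1)) ℂ := C.map Complex.ofReal with hA
  set qc : Fin (n+1) → ℂ := fun i => (p i : ℂ) with hqc
  have colA : ∀ c, ∑ r, A r c = 1 := by
    intro c
    simp only [hA, Matrix.map_apply]
    exact_mod_cast congrArg Complex.ofReal (h_col c)
  have hsq : ∑ i, qc i = 1 := by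
    simp only [hqc]
    exact_mod_cast congrArg Complex.ofReal hp1
  set e : (Fin 1 ⊕ Fin n) ≃ Fin (n+1) := finSumFinEquiv.trans (finCongr (Nat.add_comm 1 n)) with he
  set P' : Matrix (Fin 1 ⊕ Fin n) (Fin 1 ⊕ Fin n) ℂ := Matrix.of fun i j =>
    Sum.elim (fun _ : Fin 1 => qc (e i))
      (fun l => (if i = Sum.inr l then (1:ℂ) else 0) - (if i = Sum.inl 0 then 1 else 0)) j
    with hP'
  set Q' : Matrix (Fin 1 ⊕ Fin n) (Fin 1 ⊕ Fin n) ℂ := Matrix.of fun j i =>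
    Sum.elim (fun _ : Fin 1 => (1:ℂ))
      (fun l => (if i = Sum.inr l then (1:ℂ) else 0) - qc (e (Sum.inr l))) j
    with hQ'
  set B : Matrix (Fin n) (Fin n) ℂ := Matrix.of fun k l =>
    A (e (Sum.inr k)) (e (Sum.inr l)) - A (e (Sum.inr k)) (e (Sum.inl 0)) with hB
  set T' : Matrix (Fin 1 ⊕ Fin n) (Fin 1 ⊕ Fin n) ℂ := Matrix.fromBlocks 1 0 0 B with hT'
  set A' : Matrix (Fin 1 ⊕ Fin n) (Fin 1 ⊕ Fin n) ℂ := Matrix.reindex e.symm e.symm A with hA'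
  have hA'app : ∀ i j, A' i j = A (e i) (e j) := by
    intro i j
    simp [hA', Matrix.reindex_apply, Matrix.submatrix_apply]
  have hsumS : ∑ i : Fin 1 ⊕ Fin n, qc (e i) = 1 := by
    rw [Equiv.sum_comp e qc]; exact hsq
  have hcolS : ∀ c, ∑ k : Fin 1 ⊕ Fin n, A (e k) c = 1 := by
    intro c
    rw [Equiv.sum_comp e (fun k => A k c)]; exact colA c
  have hsumS' : qc (e (Sum.inl 0)) + ∑ x : Fin n, qc (e (Sum.inr x)) = 1 := by
    rw [← hsumS, Fintype.sum_sum_type, Fin.sum_univ_one]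
  -- Q' * P' = 1
  have hQP : Q' * P' = 1 := by
    ext i j
    rcases i with a | k0 <;> rcases j with b | l <;>
      simp only [Matrix.mul_apply, hP', hQ', Matrix.of_apply, Sum.elim_inl, Sum.elim_inr,
        Fintype.sum_sum_type, Matrix.one_apply]
    · simp [Fin.sum_univ_one, Subsingleton.elim a b]
      exact hsumS'
    · simp [Fin.sum_univ_one, sub_mul, mul_sub, Finset.sum_sub_distrib, Finset.sum_ite_eq']
    · simp [Fin.sum_univ_one, sub_mul, mul_sub, Finset.sum_sub_distrib, Finset.sum_ite_eq', ← Finset.mul_sum]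
      linear_combination (-qc (e (Sum.inr k0))) * hsumS'
    · simp [Fin.sum_univ_one, sub_mul, mul_sub, Finset.sum_sub_distrib, Finset.sum_ite_eq']
      rcases eq_or_ne k0 l with rfl | hne
      · simp
      · simp [hne, Ne.symm hne]
  have hPQ : P' * Q' = 1 := mul_eq_one_comm.mp hQP
  -- A' * P' = P' * T'
  have hAP : A' * P' = P' * T' := by
    ext i j
    rcases j with b | l
    · have lhs : (A' * P') i (Sum.inl b) = qc (e i) := by
        simp only [Matrix.mul_apply, hP', Matrix.of_apply, Sum.elim_inl]
        have : ∀ k : Fin 1 ⊕ Fin n, A' i k * qc (e k) = A (e i) (e k) * qc (e k) := by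
          intro k; rw [hA'app]
        rw [Finset.sum_congr rfl (fun k _ => this k)]
        rw [Equiv.sum_comp e (fun c => A (e i) c * qc c)]
        exact congrFun hq (e i)
      rw [lhs]
      simp only [Matrix.mul_apply, hP', hT', Matrix.of_apply, Fintype.sum_sum_type,
        Fin.sum_univ_one, Sum.elim_inl, Sum.elim_inr, Matrix.fromBlocks_apply₁₁,
        Matrix.fromBlocks_apply₂₁]
      simp [Matrix.one_apply, Subsingleton.elim (0 : Fin 1) b]
    · have lhs : (A' * P') i (Sum.inr l) = A (e i) (e (Sum.inr l)) - A (e i) (Sum.inl 0 |> e) := by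
        simp only [Matrix.mul_apply, hP', Matrix.of_apply, Sum.elim_inr]
        simp only [mul_sub, mul_ite, mul_one, mul_zero, Finset.sum_sub_distrib,
          Finset.sum_ite_eq', Finset.mem_univ, if_true]
        rw [hA'app, hA'app]
      rw [lhs]
      have rhs : (P' * T') i (Sum.inr l) = ∑ k : Fin n,
          ((if i = Sum.inr k then (1:ℂ) else 0) - (if i = Sum.inl 0 then 1 else 0)) * B k l := by
        simp only [Matrix.mul_apply, hP', hT', Matrix.of_apply, Fintype.sum_sum_type,
          Fin.sum_univ_one, Sum.elim_inl, Sum.elim_inr, Matrix.fromBlocks_apply₁₂,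
          Matrix.fromBlocks_apply₂₂, Matrix.zero_apply, mul_zero]
        simp
      rw [rhs]
      rcases i with a | m
      · have ha : a = 0 := Subsingleton.elim a 0
        subst ha
        have hterm : ∀ k : Fin n,
            ((if (Sum.inl 0 : Fin 1 ⊕ Fin n) = Sum.inr k then (1:ℂ) else 0) -
              (if (Sum.inl (0:Fin 1) : Fin 1 ⊕ Fin n) = Sum.inl 0 then 1 else 0)) * B k l =
            -(A (e (Sum.inr k)) (e (Sum.inr l)) - A (e (Sum.inr k)) (e (Sum.inl 0))) := by
          intro k; simp [hB]
        rw [Finset.sum_congr rfl (fun k _ => hterm k)]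
        simp only [neg_sub]
        rw [Finset.sum_sub_distrib]
        have hcol1 := hcolS (e (Sum.inr l))
        have hcol2 := hcolS (e (Sum.inl 0))
        rw [Fintype.sum_sum_type, Fin.sum_univ_one] at hcol1 hcol2
        linear_combination hcol1 - hcol2
      · simp [hB]
  have hsim : A' = P' * T' * Q' := by
    calc A' = A' * (P' * Q') := by rw [hPQ, Matrix.mul_one]
      _ = (A' * P') * Q' := by rw [Matrix.mul_assoc]
      _ = P' * T' * Q' := by rw [hAP]
  -- charpoly identities
  have hcp : A.charpoly = (X - Polynomial.C 1) * B.charpoly := by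
    have h1 : A'.charpoly = A.charpoly := Matrix.charpoly_reindex e.symm A
    rw [← h1, hsim, myCharpolySimilar P' Q' T' hPQ, hT',
      Matrix.charpoly_fromBlocks_zero₂₁, myCharpolyOne1]
  -- 1 is not a root of B.charpoly
  have hBroot : ¬ B.charpoly.IsRoot 1 := by
    intro hroot
    have hdet : (Matrix.scalar (Fin n) 1 - B).det = 0 := by
      rw [← myEvalCharpoly]; exact hroot
    obtain ⟨w, hwne, hw0⟩ := (Matrix.exists_mulVec_eq_zero_iff).mpr hdet
    have hBw : B.mulVec w = w := by
      have : Matrix.scalar (Fin n) 1 = (1 : Matrix (Fin n) (Fin n) ℂ) := by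
        ext i j
        simp [Matrix.scalar_apply, Matrix.one_apply]
      rw [this, Matrix.sub_mulVec, Matrix.one_mulVec, sub_eq_zero] at hw0
      exact hw0.symm
    set y : Fin 1 ⊕ Fin n → ℂ := Sum.elim 0 w with hy
    have hTy : T'.mulVec y = y := by
      rw [hT', hy, Matrix.fromBlocks_mulVec]
      simp [hBw]
    set v' : (Fin 1 ⊕ Fin n) → ℂ := P'.mulVec y with hv'
    have hAv' : A'.mulVec v' = v' := by
      rw [hv', Matrix.mulVec_mulVec, hAP, ← Matrix.mulVec_mulVec, hTy]
    set x : Fin (n+1) → ℂ := fun c => v' (e.symm c) with hx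
    have hAx : A.mulVec x = x := by
      funext c
      have h1 : (A.mulVec x) c = ∑ k : Fin 1 ⊕ Fin n, A c (e k) * v' k := by
        simp only [Matrix.mulVec, dotProduct, hx]
        rw [← Equiv.sum_comp e (fun d => A c d * v' (e.symm d))]
        simp
      have h2 : (A'.mulVec v') (e.symm c) = ∑ k : Fin 1 ⊕ Fin n, A c (e k) * v' k := by
        simp only [Matrix.mulVec, dotProduct]
        refine Finset.sum_congr rfl fun k _ => ?_
        rw [hA'app, Equiv.apply_symm_apply]
      rw [h1, ← h2, hAv']
    obtain ⟨c, hc⟩ := hK x hAx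
    have hveq : v' = fun k => c * qc (e k) := by
      funext k
      have : x (e k) = c * qc (e k) := by rw [hc]
      rw [hx] at this
      simpa using this
    set u0 : Fin 1 ⊕ Fin n → ℂ := Sum.elim (fun _ => (1:ℂ)) 0 with hu0
    have hPu0 : P'.mulVec u0 = fun k => qc (e k) := by
      funext k
      simp only [Matrix.mulVec, dotProduct, hu0, hP', Matrix.of_apply,
        Fintype.sum_sum_type, Fin.sum_univ_one, Sum.elim_inl, Sum.elim_inr]
      simp
    have hyc : y = c • u0 := by
      have h1 : P'.mulVec y = P'.mulVec (c • u0) := by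
        rw [Matrix.mulVec_smul, hPu0, ← hv', hveq]
        funext k; simp
      have h2 := congrArg (Q'.mulVec) h1
      rwa [Matrix.mulVec_mulVec, Matrix.mulVec_mulVec, hQP, Matrix.one_mulVec,
        Matrix.one_mulVec] at h2
    apply hwne
    funext m
    have := congrFun hyc (Sum.inr m)
    simpa [hy, hu0] using this
  -- conclude
  have hne : (X - Polynomial.C 1) * B.charpoly ≠ 0 := by
    rw [← hcp]; exact A.charpoly_monic.ne_zero
  rw [hcp, Polynomial.rootMultiplicity_mul hne, Polynomial.rootMultiplicity_X_sub_C_self,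
    Polynomial.rootMultiplicity_eq_zero hBroot]
end Mult

open Matrix

def IsEigC {n : Type*} [Fintype n] (M : Matrix n n ℝ) (μ : ℂ) : Prop :=
  ∃ v : n → ℂ, v ≠ 0 ∧ (M.map Complex.ofReal).mulVec v = μ • v

/-- If `C` is an `N × N` column-stochastic matrix with strictly positive entries, then
its spectral radius is `1` (every eigenvalue has modulus at most `1`, and `1` is an
eigenvalue), the eigenvalue `1` is simple, the vector `(1/N,…,1/N)` is a left
eigenvector for eigenvalue `1`, and there is a unique right eigenvector `v` with
strictly positive entries summing to `1` (the PageRank vector). -/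
theorem column_stochastic_positive_spectrum {N : ℕ} (hN : 0 < N)
    (C : Matrix (Fin N) (Fin N) ℝ)
    (h_pos : ∀ i j, 0 < C i j)
    (h_col : ∀ j, ∑ i, C i j = 1) :
    (∀ μ : ℂ, IsEigC C μ → ‖μ‖ ≤ 1) ∧
    IsEigC C 1 ∧
    (C.map Complex.ofReal).charpoly.rootMultiplicity 1 = 1 ∧
    Matrix.vecMul (fun _ : Fin N => (1 : ℝ) / N) C = (fun _ => (1 : ℝ) / N) ∧
    (∃! v : Fin N → ℝ, (∀ i, 0 < v i) ∧ (∑ i, v i = 1) ∧ C.mulVec v = v) := by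
  obtain ⟨n, rfl⟩ : ∃ n, N = n + 1 := ⟨N - 1, by omega⟩
  obtain ⟨p, hp_pos, hp1, hp⟩ := cExists hN h_pos h_col
  have hq : (C.map Complex.ofReal).mulVec (fun i => (p i : ℂ)) = fun i => (p i : ℂ) :=
    cMapFix hp
  have hK : ∀ x : Fin (n+1) → ℂ, (C.map Complex.ofReal).mulVec x = x →
      ∃ c : ℂ, x = fun i => c * (p i : ℂ) := by
    intro x hx
    obtain ⟨hre, him⟩ := cReFix hx
    have ha := cL3 hN h_pos h_col hp1 hp hre
    have hb := cL3 hN h_pos h_col hp1 hp him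
    refine ⟨((∑ j, (x j).re : ℝ) : ℂ) + ((∑ j, (x j).im : ℝ) : ℂ) * Complex.I, ?_⟩
    funext i
    have h1 : (x i).re = (∑ j, (x j).re) * p i := by
      have := congrFun ha i; simpa using this
    have h2 : (x i).im = (∑ j, (x j).im) * p i := by
      have := congrFun hb i; simpa using this
    apply Complex.ext
    · simp [Complex.add_re, Complex.mul_re, h1]
    · simp [Complex.add_im, Complex.mul_im, h2]
  refine ⟨?_, ?_, ?_, ?_, ?_⟩
  · -- all eigenvalues have modulus ≤ 1
    rintro μ ⟨v, hvne, hv⟩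
    set s : ℝ := ∑ i, ‖v i‖ with hs
    have hspos : 0 < s := by
      obtain ⟨i0, hi0⟩ := Function.ne_iff.mp hvne
      refine Finset.sum_pos' (fun i _ => norm_nonneg _)
        ⟨i0, Finset.mem_univ _, norm_pos_iff.mpr hi0⟩
    have h1 : ∀ i, ‖((C.map Complex.ofReal).mulVec v) i‖ ≤
        ∑ j, C i j * ‖v j‖ := by
      intro i
      simp only [Matrix.mulVec, dotProduct, Matrix.map_apply]
      refine (norm_sum_le _ _).trans ?_
      apply Finset.sum_le_sum
      intro j _
      rw [norm_mul, Complex.norm_real, Real.norm_eq_abs, abs_of_pos (h_pos i j)]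
    have key : ‖μ‖ * s ≤ s := by
      calc ‖μ‖ * s = ∑ i, ‖μ * v i‖ := by
            rw [hs, Finset.mul_sum]; simp [norm_mul]
        _ = ∑ i, ‖((C.map Complex.ofReal).mulVec v) i‖ := by
            rw [hv]; simp
        _ ≤ ∑ i, ∑ j, C i j * ‖v j‖ := Finset.sum_le_sum (fun i _ => h1 i)
        _ = ∑ j, (∑ i, C i j) * ‖v j‖ := by
            rw [Finset.sum_comm]; simp [Finset.sum_mul]
        _ = s := by simp [h_col, hs]
    have := le_of_mul_le_mul_right (by linarith : ‖μ‖ * s ≤ 1 * s) hspos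
    exact this
  · -- 1 is an eigenvalue
    refine ⟨fun i => (p i : ℂ), ?_, ?_⟩
    · intro h
      have := congrFun h 0
      simp only [Pi.zero_apply, Complex.ofReal_eq_zero] at this
      exact (hp_pos 0).ne' this
    · rw [hq, one_smul]
  · -- algebraic multiplicity of 1 is 1
    exact myRootMult C h_col p hp1 hp hq hK
  · -- left eigenvector
    funext j
    simp only [Matrix.vecMul, dotProduct]
    rw [← Finset.mul_sum, h_col j, mul_one]
  · -- unique positive right eigenvector
    refine ⟨p, ⟨hp_pos, hp1, hp⟩, ?_⟩
    rintro v ⟨_, hv1, hvfix⟩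
    have := cL3 hN h_pos h_col hp1 hp hvfix
    rwa [hv1, one_smul] at this
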